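/- Let K be Hermitian positive definite and Γ Hermitian positive semidefinite, with eigendecomposition K^{-1/2} Γ K^{-1/2} = U Σ U^H, Σ = diag(p₁,…,p_n). Then the matrix Q* = K^{-1/2} U Λ U^H K^{-1/2}, where Λ_ii = max(1 − σ²/p_i, 0), is a global maximizer of f(Q) = log det(I + Γ Q / σ²) − tr(K Q) over Hermitian positive semidefinite Q. -/

import Mathlib

open Matrix ComplexOrder


-- log det ≤ tr - n for complex PosDef
lemma logdet_le_trace {n : ℕ} {X : Matrix (Fin n) (Fin n) ℂ} (hX : X.PosDef) :
    Real.log X.det.re ≤ X.trace.re - n := by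
  have hH := hX.isHermitian
  have hdet : X.det.re = ∏ i, hH.eigenvalues i := by
    rw [hH.det_eq_prod_eigenvalues]
    norm_cast
  have htr : X.trace.re = ∑ i, hH.eigenvalues i := by
    conv_lhs => rw [hH.spectral_theorem]
    rw [Unitary.conjStarAlgAut_apply, Matrix.trace_mul_cycle]
    rw [show (star (hH.eigenvectorUnitary : Matrix (Fin n) (Fin n) ℂ)) *
        (hH.eigenvectorUnitary : Matrix (Fin n) (Fin n) ℂ) = 1 from hH.eigenvectorUnitary.2.1]
    rw [Matrix.one_mul, Matrix.trace_diagonal]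
    have hc : ∀ r : ℝ, (RCLike.ofReal r : ℂ) = (r : ℂ) := fun r => rfl
    simp only [Function.comp_apply, hc]
    norm_cast
  rw [hdet, htr]
  have hpos : ∀ i : Fin n, 0 < hH.eigenvalues i := fun i => hX.eigenvalues_pos i
  rw [Real.log_prod (fun i _ => (hpos i).ne')]
  calc ∑ i, Real.log (hH.eigenvalues i) ≤ ∑ i, (hH.eigenvalues i - 1) :=
        Finset.sum_le_sum fun i _ => Real.log_le_sub_one_of_pos (hpos i)
    _ = (∑ i, hH.eigenvalues i) - n := by
        rw [Finset.sum_sub_distrib]; simp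

lemma posDef_conj {n : ℕ} {B G : Matrix (Fin n) (Fin n) ℂ} (hB : B.PosDef)
    (hG : IsUnit G.det) : (Gᴴ * B * G).PosDef := by
  refine .of_dotProduct_mulVec_pos (isHermitian_conjTranspose_mul_mul G hB.1) fun x hx => ?_
  have hGx : G *ᵥ x ≠ 0 := by
    intro h
    exact hx (by simpa [h] using ((Matrix.mulVec_injective_iff_isUnit.mpr
      ((Matrix.isUnit_iff_isUnit_det G).mpr hG)).eq_iff (a := x) (b := 0)).mp (by simpa using h))
  simpa only [star_mulVec, dotProduct_mulVec, vecMul_vecMul] using hB.dotProduct_mulVec_pos hGx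

lemma det_one_add_smul_conj {n : ℕ} (c : ℂ) (V W X : Matrix (Fin n) (Fin n) ℂ)
    (h : W * V = 1) : (1 + c • (V * X * W)).det = (1 + c • X).det := by
  have h1 : c • (V * X * W) = V * (c • (X * W)) := by
    rw [mul_smul_comm, Matrix.mul_assoc]
  rw [h1, Matrix.det_one_add_mul_comm, smul_mul_assoc, Matrix.mul_assoc, h, Matrix.mul_one]


-- scalar water-filling inequality
lemma scalar_wf (p σ2 m : ℝ) (hp : 0 ≤ p) (hσ2 : 0 < σ2) (hm : 0 ≤ m) :
    (1 + σ2⁻¹ * (p * (if p = 0 then 0 else max (1 - σ2 / p) 0)))⁻¹ *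
      (1 + σ2⁻¹ * (p * m)) - 1 - m + (if p = 0 then 0 else max (1 - σ2 / p) 0) ≤ 0 := by
  rcases eq_or_lt_of_le hp with h0 | hppos
  · simp only [← h0, if_true]
    simp
    nlinarith [mul_nonneg (le_of_lt (inv_pos.mpr hσ2)) hm]
  · rw [if_neg hppos.ne']
    rcases le_or_gt σ2 p with hle | hlt
    · have hmax : max (1 - σ2 / p) 0 = 1 - σ2 / p := by
        apply max_eq_left; rw [sub_nonneg]; exact div_le_one_of_le₀ hle hp
      rw [hmax]
      have ha : 1 + σ2⁻¹ * (p * (1 - σ2 / p)) = p / σ2 := by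
        field_simp
        ring
      rw [ha]
      have h1 : (p / σ2)⁻¹ = σ2 / p := by rw [inv_div]
      rw [h1]
      have hps : 0 < p := hppos
      field_simp
      ring_nf
      nlinarith [hσ2, hps]
    · have hmax : max (1 - σ2 / p) 0 = 0 := by
        apply max_eq_right
        rw [sub_nonpos]
        exact le_of_lt ((one_lt_div hppos).mpr hlt)
      rw [hmax]
      simp only [mul_zero, add_zero, inv_one]
      have h1 : σ2⁻¹ * p < 1 := by
        rw [← div_eq_inv_mul]
        exact (div_lt_one hσ2).mpr hlt
      nlinarith [mul_le_mul_of_nonneg_right h1.le hm]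

lemma key_ineq {n : ℕ} (p : Fin n → ℝ) (hp : ∀ i, 0 ≤ p i) (σ2 : ℝ) (hσ2 : 0 < σ2)
    (M : Matrix (Fin n) (Fin n) ℂ) (hM : M.PosSemidef) :
    Real.log ((1 + ((σ2:ℂ))⁻¹ • (Matrix.diagonal (fun i => (p i : ℂ)) * M)).det.re)
      - M.trace.re
    ≤ (∑ i, Real.log (1 + σ2⁻¹ * (p i * (if p i = 0 then 0 else max (1 - σ2 / p i) 0))))
      - ∑ i, (if p i = 0 then 0 else max (1 - σ2 / p i) 0) := by
  classical
  set lam : Fin n → ℝ := fun i => if p i = 0 then 0 else max (1 - σ2 / p i) 0 with hlam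
  set a : Fin n → ℝ := fun i => 1 + σ2⁻¹ * (p i * lam i) with ha
  have hlam0 : ∀ i, 0 ≤ lam i := by
    intro i; rw [hlam]; dsimp only; split
    · exact le_refl 0
    · exact le_max_right _ _
  have hapos : ∀ i, 0 < a i := by
    intro i; rw [ha]; dsimp only
    have : 0 ≤ σ2⁻¹ * (p i * lam i) :=
      mul_nonneg (inv_pos.mpr hσ2).le (mul_nonneg (hp i) (hlam0 i))
    linarith
  -- the square root matrix F with F * F = σ2⁻¹ • D
  set f : Fin n → ℂ := fun i => ((Real.sqrt (p i / σ2) : ℝ) : ℂ) with hf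
  set F : Matrix (Fin n) (Fin n) ℂ := Matrix.diagonal f with hF
  have hFH : Fᴴ = F := by
    rw [hF, Matrix.diagonal_conjTranspose]
    ext i j
    rcases eq_or_ne i j with rfl | hne
    · simp [hf, Complex.conj_ofReal]
    · simp [Matrix.diagonal_apply_ne _ hne]
  have hff : ∀ i, f i * f i = ((σ2:ℂ))⁻¹ * (p i : ℂ) := by
    intro i
    rw [hf]
    dsimp only
    rw [← Complex.ofReal_mul, Real.mul_self_sqrt (div_nonneg (hp i) hσ2.le)]
    push_cast
    rw [div_eq_inv_mul]
  have hFF : F * F = ((σ2:ℂ))⁻¹ • Matrix.diagonal (fun i => (p i : ℂ)) := by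
    rw [hF, Matrix.diagonal_mul_diagonal, ← Matrix.diagonal_smul]
    ext i j
    rcases eq_or_ne i j with rfl | hne
    · simp only [Matrix.diagonal_apply_eq, Pi.smul_apply, smul_eq_mul]
      exact hff i
    · simp [Matrix.diagonal_apply_ne _ hne]
  set BB : Matrix (Fin n) (Fin n) ℂ := 1 + F * M * F with hBB
  have hdet1 : (1 + ((σ2:ℂ))⁻¹ • (Matrix.diagonal (fun i => (p i : ℂ)) * M)).det = BB.det := by
    rw [hBB, ← smul_mul_assoc, ← hFF, Matrix.mul_assoc, Matrix.det_one_add_mul_comm]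
  have hFMF : (F * M * F).PosSemidef := by
    have := hM.mul_mul_conjTranspose_same F
    rwa [hFH] at this
  have hBpos : BB.PosDef := Matrix.PosDef.add_posSemidef Matrix.PosDef.one hFMF
  -- diagonal entries of M
  set m : Fin n → ℝ := fun i => (M i i).re with hmdef
  have hMii : ∀ i, M i i = ((m i : ℝ) : ℂ) := by
    intro i
    have h2 : (0:ℂ) ≤ M i i := by
      simpa [Matrix.mulVec, dotProduct, Pi.single_apply] using hM.dotProduct_mulVec_nonneg (Pi.single i 1)
    rw [Complex.nonneg_iff] at h2
    exact Complex.ext rfl h2.2.symm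
  have hm0 : ∀ i, 0 ≤ m i := by
    intro i
    have h2 : (0:ℂ) ≤ M i i := by
      simpa [Matrix.mulVec, dotProduct, Pi.single_apply] using hM.dotProduct_mulVec_nonneg (Pi.single i 1)
    rw [Complex.nonneg_iff] at h2
    exact h2.1
  have hBBii : ∀ i, BB i i = ((1 + σ2⁻¹ * (p i * m i) : ℝ) : ℂ) := by
    intro i
    rw [hBB]
    simp only [Matrix.add_apply, Matrix.one_apply_eq, hF, Matrix.mul_diagonal,
      Matrix.diagonal_mul]
    rw [mul_comm (f i) (M i i), mul_assoc, hff i, hMii i]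
    push_cast
    ring
  -- the scaling matrix G
  set g : Fin n → ℂ := fun i => (((Real.sqrt (a i))⁻¹ : ℝ) : ℂ) with hg
  set G : Matrix (Fin n) (Fin n) ℂ := Matrix.diagonal g with hG
  have hGH : Gᴴ = G := by
    rw [hG, Matrix.diagonal_conjTranspose]
    ext i j
    rcases eq_or_ne i j with rfl | hne
    · simp [hg, Complex.conj_ofReal]
    · simp [Matrix.diagonal_apply_ne _ hne]
  have hgg : ∀ i, g i * g i = (((a i)⁻¹ : ℝ) : ℂ) := by
    intro i
    rw [hg]
    dsimp only
    rw [← Complex.ofReal_mul, ← mul_inv, Real.mul_self_sqrt (hapos i).le]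
  have hGdet : IsUnit G.det := by
    rw [hG, Matrix.det_diagonal]
    apply isUnit_iff_ne_zero.mpr
    apply Finset.prod_ne_zero_iff.mpr
    intro i _
    rw [hg]
    simp only [ne_eq, Complex.ofReal_eq_zero, inv_eq_zero]
    exact Real.sqrt_ne_zero'.mpr (hapos i)
  set X : Matrix (Fin n) (Fin n) ℂ := G * BB * G with hX
  have hXpos : X.PosDef := by
    have := posDef_conj hBpos hGdet
    rwa [hGH] at this
  -- determinant relation
  have hdetX : X.det = (((∏ i, (a i)⁻¹ : ℝ) : ℝ) : ℂ) * BB.det := by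
    rw [hX, Matrix.det_mul, Matrix.det_mul, hG, Matrix.det_diagonal]
    rw [mul_comm, ← mul_assoc]
    congr 1
    rw [mul_comm, ← Finset.prod_mul_distrib]
    rw [show ((∏ i, (a i)⁻¹ : ℝ) : ℂ) = ∏ i, (((a i)⁻¹ : ℝ) : ℂ) from by push_cast; rfl]
    exact Finset.prod_congr rfl fun i _ => hgg i
  have hXdet_re : X.det.re = (∏ i, (a i)⁻¹) * BB.det.re := by
    rw [hdetX, Complex.re_ofReal_mul]
  have hXdetpos : 0 < X.det.re := by
    have := hXpos.det_pos
    rw [Complex.lt_def] at this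
    simpa using this.1
  have hprodinv : (0:ℝ) < ∏ i, (a i)⁻¹ :=
    Finset.prod_pos fun i _ => inv_pos.mpr (hapos i)
  have hBBdet_re : BB.det.re = (∏ i, a i) * X.det.re := by
    rw [hXdet_re, ← mul_assoc, ← Finset.prod_mul_distrib]
    rw [Finset.prod_congr rfl fun i _ => mul_inv_cancel₀ (hapos i).ne']
    simp
  -- trace of X
  have hXii : ∀ i, X i i = (((a i)⁻¹ * (1 + σ2⁻¹ * (p i * m i)) : ℝ) : ℂ) := by
    intro i
    rw [hX, hG]
    simp only [Matrix.mul_diagonal, Matrix.diagonal_mul]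
    rw [mul_comm (g i) (BB i i), mul_assoc, hgg i, hBBii i]
    push_cast
    ring
  have hXtr : X.trace.re = ∑ i, (a i)⁻¹ * (1 + σ2⁻¹ * (p i * m i)) := by
    rw [Matrix.trace]
    rw [Complex.re_sum]
    exact Finset.sum_congr rfl fun i _ => by rw [Matrix.diag_apply, hXii i, Complex.ofReal_re]
  have hMtr : M.trace.re = ∑ i, m i := by
    rw [Matrix.trace, Complex.re_sum]
    exact Finset.sum_congr rfl fun i _ => by rw [Matrix.diag_apply, hMii i, Complex.ofReal_re]
  -- put together
  rw [hdet1, hMtr, hBBdet_re]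
  have hlog : Real.log ((∏ i, a i) * X.det.re)
      = (∑ i, Real.log (a i)) + Real.log X.det.re := by
    rw [Real.log_mul (Finset.prod_pos fun i _ => hapos i).ne' hXdetpos.ne']
    rw [Real.log_prod fun i _ => (hapos i).ne']
  rw [hlog]
  have hkey := logdet_le_trace hXpos
  rw [hXtr] at hkey
  have hsum : ∑ i, ((a i)⁻¹ * (1 + σ2⁻¹ * (p i * m i)) - 1 - m i + lam i) ≤ 0 := by
    apply Finset.sum_nonpos
    intro i _
    exact scalar_wf (p i) σ2 (m i) (hp i) hσ2 (hm0 i)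
  have hexp : ∑ i, ((a i)⁻¹ * (1 + σ2⁻¹ * (p i * m i)) - 1 - m i + lam i)
      = (∑ i, (a i)⁻¹ * (1 + σ2⁻¹ * (p i * m i))) - n - (∑ i, m i) + ∑ i, lam i := by
    rw [Finset.sum_add_distrib, Finset.sum_sub_distrib, Finset.sum_sub_distrib]
    simp [Finset.card_univ]
  rw [hexp] at hsum
  have hgoal_rhs : (∑ i, Real.log (1 + σ2⁻¹ * (p i * (if p i = 0 then 0
      else max (1 - σ2 / p i) 0)))) - ∑ i, (if p i = 0 then 0 else max (1 - σ2 / p i) 0)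
      = (∑ i, Real.log (a i)) - ∑ i, lam i := rfl
  rw [hgoal_rhs]
  linarith

/-- Proposition 1: Let `K ≻ 0`, `Γ ⪰ 0`, and let `S = K^{-1/2}`
(the PSD square root of `K⁻¹`). With the eigendecomposition
`S Γ S = U diag(p) Uᴴ` (`U` unitary, `p ≥ 0`), the matrix
`Q* = S U Λ Uᴴ S`, `Λᵢᵢ = max(1 − σ²/pᵢ, 0)` (and `0` when `pᵢ = 0`),
globally maximizes `log det(I + Γ Q/σ²) − tr(K Q)` over Hermitian PSD `Q`. -/
theorem sar_aware_water_filling {n : ℕ}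
    (K Γ S : Matrix (Fin n) (Fin n) ℂ) (hK : K.PosDef) (hΓ : Γ.PosSemidef)
    (hS : S.PosSemidef) (hSS : S * S = K⁻¹)
    (U : Matrix (Fin n) (Fin n) ℂ) (hU : U ∈ Matrix.unitaryGroup (Fin n) ℂ)
    (p : Fin n → ℝ) (hp : ∀ i, 0 ≤ p i)
    (hdecomp : S * Γ * S = U * Matrix.diagonal (fun i => (p i : ℂ)) * Uᴴ)
    (σ2 : ℝ) (hσ2 : 0 < σ2) :
    let Λ : Matrix (Fin n) (Fin n) ℂ :=
      Matrix.diagonal (fun i => if p i = 0 then 0 else ((max (1 - σ2 / p i) 0 : ℝ) : ℂ))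
    let Qstar : Matrix (Fin n) (Fin n) ℂ := S * U * Λ * Uᴴ * S
    let f : Matrix (Fin n) (Fin n) ℂ → ℝ := fun Q =>
      Real.log ((1 + ((σ2 : ℂ))⁻¹ • (Γ * Q)).det.re) - (K * Q).trace.re
    Qstar.PosSemidef ∧ ∀ Q : Matrix (Fin n) (Fin n) ℂ, Q.PosSemidef → f Q ≤ f Qstar := by
  classical
  intro Λ Qstar f
  set lam : Fin n → ℝ := fun i => if p i = 0 then 0 else max (1 - σ2 / p i) 0 with hlamdef
  set D : Matrix (Fin n) (Fin n) ℂ := Matrix.diagonal (fun i => (p i : ℂ)) with hD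
  have hΛeq : Λ = Matrix.diagonal (fun i => ((lam i : ℝ) : ℂ)) := by
    show Matrix.diagonal _ = Matrix.diagonal _
    ext i j
    rcases eq_or_ne i j with rfl | hne
    · simp only [Matrix.diagonal_apply_eq, hlamdef]
      split <;> simp
    · simp [Matrix.diagonal_apply_ne _ hne]
  have hlam0 : ∀ i, 0 ≤ lam i := by
    intro i; rw [hlamdef]; dsimp only; split
    · exact le_refl 0
    · exact le_max_right _ _
  -- unitary facts
  have hU1 : Uᴴ * U = 1 := hU.1
  have hU2 : U * Uᴴ = 1 := hU.2
  -- invertibility of S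
  have hSdet : IsUnit S.det := by
    have h1 : S.det * S.det ≠ 0 := by
      rw [← Matrix.det_mul, hSS]
      exact hK.inv.det_pos.ne'
    exact isUnit_iff_ne_zero.mpr (fun h => h1 (by rw [h, zero_mul]))
  have hSinv1 : S⁻¹ * S = 1 := Matrix.nonsing_inv_mul S hSdet
  have hSinv2 : S * S⁻¹ = 1 := Matrix.mul_nonsing_inv S hSdet
  have hKdet : IsUnit K.det := isUnit_iff_ne_zero.mpr hK.det_pos.ne'
  have hKeq : K = S⁻¹ * S⁻¹ := by
    rw [← Matrix.mul_inv_rev, hSS, Matrix.nonsing_inv_nonsing_inv K hKdet]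
  have hSiH : S⁻¹ᴴ = S⁻¹ := by
    rw [Matrix.conjTranspose_nonsing_inv, hS.1.eq]
  -- cancellation lemmas
  have c1 : ∀ X : Matrix (Fin n) (Fin n) ℂ, S⁻¹ * (S * X) = X := fun X => by
    rw [← Matrix.mul_assoc, hSinv1, Matrix.one_mul]
  have c2 : ∀ X : Matrix (Fin n) (Fin n) ℂ, S * (S⁻¹ * X) = X := fun X => by
    rw [← Matrix.mul_assoc, hSinv2, Matrix.one_mul]
  have c3 : ∀ X : Matrix (Fin n) (Fin n) ℂ, Uᴴ * (U * X) = X := fun X => by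
    rw [← Matrix.mul_assoc, hU1, Matrix.one_mul]
  have c4 : ∀ X : Matrix (Fin n) (Fin n) ℂ, U * (Uᴴ * X) = X := fun X => by
    rw [← Matrix.mul_assoc, hU2, Matrix.one_mul]
  -- Λ and Qstar positive semidefinite
  have hΛpsd : Λ.PosSemidef := by
    rw [hΛeq]
    refine Matrix.PosSemidef.diagonal fun i => ?_
    rw [Pi.zero_apply, Complex.nonneg_iff]
    constructor
    · simpa using hlam0 i
    · simp
  have hQstarPsd : Qstar.PosSemidef := by
    have h := hΛpsd.mul_mul_conjTranspose_same (S * U)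
    have he : S * U * Λ * (S * U)ᴴ = Qstar := by
      show S * U * Λ * (S * U)ᴴ = S * U * Λ * Uᴴ * S
      rw [Matrix.conjTranspose_mul, hS.1.eq, Matrix.mul_assoc (S * U * Λ)]
    rwa [he] at h
  refine ⟨hQstarPsd, fun Q hQ => ?_⟩
  -- the transformed matrix
  set MM : Matrix (Fin n) (Fin n) ℂ → Matrix (Fin n) (Fin n) ℂ :=
    fun Q' => Uᴴ * (S⁻¹ * Q' * S⁻¹) * U with hMM
  -- f in terms of MM
  have hΓeq : Γ = S⁻¹ * (U * D * Uᴴ) * S⁻¹ := by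
    have h := congrArg (fun X => S⁻¹ * X * S⁻¹) hdecomp
    rw [← h]
    simp only [Matrix.mul_assoc, c1, c2, hSinv1, hSinv2, Matrix.mul_one, Matrix.one_mul]
  have hWV : (Uᴴ * S) * (S⁻¹ * U) = 1 := by
    simp only [Matrix.mul_assoc, c2, hU1]
  have hf : ∀ Q' : Matrix (Fin n) (Fin n) ℂ,
      f Q' = Real.log ((1 + ((σ2:ℂ))⁻¹ • (D * MM Q')).det.re) - (MM Q').trace.re := by
    intro Q'
    have htr : (K * Q').trace = (MM Q').trace := by
      rw [hMM]
      dsimp only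
      rw [Matrix.trace_mul_cycle, hU2, Matrix.one_mul, Matrix.trace_mul_cycle, ← hKeq]
    have hΓQ : Γ * Q' = (S⁻¹ * U) * (D * MM Q') * (Uᴴ * S) := by
      rw [hΓeq, hMM]
      simp only [Matrix.mul_assoc, c1, c2, c3, c4, hU1, hU2, hSinv1, hSinv2,
        Matrix.mul_one, Matrix.one_mul]
    show Real.log ((1 + ((σ2 : ℂ))⁻¹ • (Γ * Q')).det.re) - (K * Q').trace.re = _
    rw [hΓQ, det_one_add_smul_conj _ _ _ _ hWV, htr]
  -- MM Qstar = Λ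
  have hMQstar : MM Qstar = Λ := by
    rw [hMM]
    show Uᴴ * (S⁻¹ * (S * U * Λ * Uᴴ * S) * S⁻¹) * U = Λ
    simp only [Matrix.mul_assoc, c1, c2, c3, c4, hU1, hU2, hSinv1, hSinv2,
      Matrix.mul_one, Matrix.one_mul]
  -- MM Q is PSD
  have hMQpsd : (MM Q).PosSemidef := by
    have h := hQ.conjTranspose_mul_mul_same (S⁻¹ * U)
    have he : (S⁻¹ * U)ᴴ * Q * (S⁻¹ * U) = MM Q := by
      rw [hMM, Matrix.conjTranspose_mul, hSiH]
      dsimp only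
      simp only [Matrix.mul_assoc]
    rwa [he] at h
  -- value at Qstar
  have hfQstar : f Qstar = (∑ i, Real.log (1 + σ2⁻¹ * (p i * lam i))) - ∑ i, lam i := by
    rw [hf Qstar, hMQstar]
    have hDΛ : (1 : Matrix (Fin n) (Fin n) ℂ) + ((σ2:ℂ))⁻¹ • (D * Λ)
        = Matrix.diagonal (fun i => ((1 + σ2⁻¹ * (p i * lam i) : ℝ) : ℂ)) := by
      rw [hΛeq, hD, Matrix.diagonal_mul_diagonal]
      ext i j
      rcases eq_or_ne i j with rfl | hne
      · simp only [Matrix.add_apply, Matrix.one_apply_eq, Matrix.smul_apply,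
          Matrix.diagonal_apply_eq, smul_eq_mul]
        push_cast
        ring
      · simp [Matrix.diagonal_apply_ne _ hne, Matrix.one_apply_ne hne]
    rw [hDΛ, Matrix.det_diagonal]
    have hprod : (∏ i, ((1 + σ2⁻¹ * (p i * lam i) : ℝ) : ℂ))
        = ((∏ i, (1 + σ2⁻¹ * (p i * lam i)) : ℝ) : ℂ) := by push_cast; rfl
    rw [hprod, Complex.ofReal_re]
    have hapos : ∀ i, 0 < 1 + σ2⁻¹ * (p i * lam i) := by
      intro i
      have : 0 ≤ σ2⁻¹ * (p i * lam i) :=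
        mul_nonneg (inv_pos.mpr hσ2).le (mul_nonneg (hp i) (hlam0 i))
      linarith
    rw [Real.log_prod fun i _ => (hapos i).ne']
    congr 1
    rw [hΛeq, Matrix.trace_diagonal]
    rw [show (∑ i, ((lam i : ℝ) : ℂ)) = ((∑ i, lam i : ℝ) : ℂ) by push_cast; rfl,
      Complex.ofReal_re]
  -- conclude
  rw [hf Q, hfQstar]
  have := key_ineq p hp σ2 hσ2 (MM Q) hMQpsd
  rw [← hD] at this
  exact this
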